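/- Every sequentially compact space in which the closure of every countable set is first countable is n-sequentially compact for all n ≥ 1, given that every sequentially compact first countable space is n-sequentially compact for all n ≥ 1. -/
import Mathlib


/-- `f ↾ [B]^n` converges to `p`. -/
def ConvergesOn {X : Type*} [TopologicalSpace X] (n : ℕ) (B : Set ℕ) (f : Finset ℕ → X)
    (p : X) : Prop :=
  ∀ U ∈ nhds p, ∃ F : Finset ℕ, ∀ s : Finset ℕ, s.card = n → ↑s ⊆ B \ ↑F → f s ∈ U

/-- `X` is `n`-sequentially compact. -/
def NSeqCompact (n : ℕ) (X : Type*) [TopologicalSpace X] : Prop :=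
  ∀ f : Finset ℕ → X, ∃ B : Set ℕ, B.Infinite ∧ ∃ p : X, ConvergesOn n B f p

/-- A closed set in a sequentially compact space gives a sequentially compact subspace. -/
lemma seqCompactSpace_closure {X : Type*} [TopologicalSpace X] [SeqCompactSpace X]
    (S : Set X) : SeqCompactSpace (closure S) := by
  constructor
  intro u _
  obtain ⟨x, φ, hφ, hconv⟩ := SeqCompactSpace.tendsto_subseq (fun k => (u k : X))
  have hx : x ∈ closure S :=
    isClosed_closure.isSeqClosed (fun k => (u (φ k)).2) hconv
  exact ⟨⟨x, hx⟩, Set.mem_univ _, φ, hφ, tendsto_subtype_rng.mpr hconv⟩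

/-- Assuming that every sequentially compact first countable space is `n`-sequentially
compact for every `n ≥ 1`, every sequentially compact space in which the closure of
every countable set is first countable is `n`-sequentially compact for every `n ≥ 1`. -/
theorem nSeqCompact_of_countable_closure_firstCountable
    (h : ∀ (Y : Type u) [TopologicalSpace Y], SeqCompactSpace Y →
      FirstCountableTopology Y → ∀ n : ℕ, 1 ≤ n → NSeqCompact n Y)
    (X : Type u) [TopologicalSpace X] (hX : SeqCompactSpace X)
    (hc : ∀ S : Set X, S.Countable → FirstCountableTopology (closure S)) :
    ∀ n : ℕ, 1 ≤ n → NSeqCompact n X := by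
  intro n hn f
  set S : Set X := Set.range f with hS
  have hScount : S.Countable := Set.countable_range f
  have hYseq : SeqCompactSpace (closure S) := seqCompactSpace_closure S
  have hYfc : FirstCountableTopology (closure S) := hc S hScount
  set g : Finset ℕ → closure S := fun s => ⟨f s, subset_closure ⟨s, rfl⟩⟩ with hg
  obtain ⟨B, hB, p, hp⟩ := h (closure S) hYseq hYfc n hn g
  refine ⟨B, hB, (p : X), ?_⟩
  intro U hU
  have hU' : (Subtype.val : closure S → X) ⁻¹' U ∈ nhds p :=
    (continuous_subtype_val.tendsto p) hU
  obtain ⟨F, hF⟩ := hp _ hU'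
  exact ⟨F, fun s hcard hsub => hF s hcard hsub⟩
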